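/- arXiv:2603.19641 — 8 statements merged into one kernel-verified Lean document; each statement's English description precedes it below -/
import Mathlib

section
/- Let D1 = S̄ - T̄ + δS + δT and D2 = T̄ - S̄ + δS + δT where T̄ > S̄. Then the pair of conditions (max{min{2δR, D1}, min{D2, 2δP}, -max{2δR, D2}, -max{D1, 2δP}} ≥ 0 and min{max{2δR, D1}, max{D2, 2δP}, -min{2δR, D2}, -min{D1, 2δP}} ≤ 0) fails if and only if (δR > 0 and δP > 0 and δS + δT < S̄ - T̄) or (δR < 0 and δP < 0 and δS + δT > T̄ - S̄). -/
/-- Theorem 1 (reduction to reals): the necessary condition for fair ZD strategies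
fails iff one of the two sign conditions holds. -/
theorem stmt_0 (Tb Sb dR dS dT dP : ℝ) (hTS : Tb > Sb) :
    ¬ (max (max (min (2*dR) (Sb - Tb + dS + dT)) (min (Tb - Sb + dS + dT) (2*dP)))
          (max (-(max (2*dR) (Tb - Sb + dS + dT))) (-(max (Sb - Tb + dS + dT) (2*dP)))) ≥ 0
        ∧ min (min (max (2*dR) (Sb - Tb + dS + dT)) (max (Tb - Sb + dS + dT) (2*dP)))
          (min (-(min (2*dR) (Tb - Sb + dS + dT))) (-(min (Sb - Tb + dS + dT) (2*dP)))) ≤ 0)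
    ↔ (dR > 0 ∧ dP > 0 ∧ dS + dT < Sb - Tb) ∨ (dR < 0 ∧ dP < 0 ∧ dS + dT > Tb - Sb) := by
  constructor
  · intro h
    rcases not_and_or.mp h with h | h
    · rw [not_le] at h
      simp only [max_lt_iff, min_lt_iff, neg_lt_zero, lt_max_iff] at h
      obtain ⟨⟨h1, h2⟩, h3, h4⟩ := h
      rcases h1 with h1 | h1 <;> rcases h2 with h2 | h2 <;>
        rcases h3 with h3 | h3 <;> rcases h4 with h4 | h4 <;>
        first
          | (left; exact ⟨by linarith, by linarith, by linarith⟩)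
          | (right; exact ⟨by linarith, by linarith, by linarith⟩)
    · rw [not_le] at h
      simp only [lt_min_iff, lt_max_iff, neg_pos, min_lt_iff] at h
      obtain ⟨⟨h1, h2⟩, h3, h4⟩ := h
      rcases h1 with h1 | h1 <;> rcases h2 with h2 | h2 <;>
        rcases h3 with h3 | h3 <;> rcases h4 with h4 | h4 <;>
        first
          | (left; exact ⟨by linarith, by linarith, by linarith⟩)
          | (right; exact ⟨by linarith, by linarith, by linarith⟩)
  · rintro (⟨hR, hP, hD⟩ | ⟨hR, hP, hD⟩) ⟨hA, hB⟩
    · have : max (max (min (2*dR) (Sb - Tb + dS + dT)) (min (Tb - Sb + dS + dT) (2*dP)))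
          (max (-(max (2*dR) (Tb - Sb + dS + dT))) (-(max (Sb - Tb + dS + dT) (2*dP)))) < 0 := by
        apply max_lt
        · apply max_lt
          · exact lt_of_le_of_lt (min_le_right _ _) (by linarith)
          · exact lt_of_le_of_lt (min_le_left _ _) (by linarith)
        · apply max_lt
          · rw [neg_lt_zero]; exact lt_of_lt_of_le (by linarith) (le_max_left _ _)
          · rw [neg_lt_zero]; exact lt_of_lt_of_le (by linarith) (le_max_right _ _)
      linarith
    · have : (0 : ℝ) < min (min (max (2*dR) (Sb - Tb + dS + dT)) (max (Tb - Sb + dS + dT) (2*dP)))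
          (min (-(min (2*dR) (Tb - Sb + dS + dT))) (-(min (Sb - Tb + dS + dT) (2*dP)))) := by
        apply lt_min
        · apply lt_min
          · exact lt_of_lt_of_le (by linarith) (le_max_right _ _)
          · exact lt_of_lt_of_le (by linarith) (le_max_left _ _)
        · apply lt_min
          · rw [neg_pos]; exact lt_of_le_of_lt (min_le_left _ _) (by linarith)
          · rw [neg_pos]; exact lt_of_le_of_lt (min_le_right _ _) (by linarith)
      linarith
end

section
/- There exist real numbers T̄, S̄, δR, δS, δT, δP with T̄ > S̄ such that: the necessary condition of Theorem 1 holds (i.e. neither (δR > 0 ∧ δP > 0 ∧ δS + δT < S̄ - T̄) nor (δR < 0 ∧ δP < 0 ∧ δS + δT > T̄ - S̄)) but the necessary-and-sufficient condition of Theorem 2 fails (i.e. neither (S̄ - T̄ + δS + δT ≤ 2·min(δR, δP) ∧ T̄ - S̄ + δS + δT ≥ 2·max(δR, δP)) nor (S̄ - T̄ + δS + δT ≥ 2·min(δR, δP) ∧ T̄ - S̄ + δS + δT ≤ 2·max(δR, δP))). In particular any parameters satisfying δR > 0, δP < 0, S̄ - T̄ + δS + δT < 2δP, and T̄ - S̄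 + δS + δT < 2δR work. -/
/-- The necessary condition of Theorem 1 is strictly weaker than the necessary and
sufficient condition of Theorem 2: there are parameters satisfying the former but
not the latter; in particular any parameters with δR > 0, δP < 0,
S̄-T̄+δS+δT < 2δP, T̄-S̄+δS+δT < 2δR work. -/
theorem stmt_3 :
    (∃ Tb Sb dR dS dT dP : ℝ, Tb > Sb ∧
      (¬ (dR > 0 ∧ dP > 0 ∧ dS + dT < Sb - Tb) ∧
       ¬ (dR < 0 ∧ dP < 0 ∧ dS + dT > Tb - Sb)) ∧
      (¬ (Sb - Tb + dS + dT ≤ 2 * min dR dP ∧ Tb - Sb + dS + dT ≥ 2 * max dR dP) ∧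
       ¬ (Sb - Tb + dS + dT ≥ 2 * min dR dP ∧ Tb - Sb + dS + dT ≤ 2 * max dR dP)))
    ∧ (∀ Tb Sb dR dS dT dP : ℝ, Tb > Sb →
        dR > 0 → dP < 0 → Sb - Tb + dS + dT < 2 * dP → Tb - Sb + dS + dT < 2 * dR →
      (¬ (dR > 0 ∧ dP > 0 ∧ dS + dT < Sb - Tb) ∧
       ¬ (dR < 0 ∧ dP < 0 ∧ dS + dT > Tb - Sb)) ∧
      (¬ (Sb - Tb + dS + dT ≤ 2 * min dR dP ∧ Tb - Sb + dS + dT ≥ 2 * max dR dP) ∧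
       ¬ (Sb - Tb + dS + dT ≥ 2 * min dR dP ∧ Tb - Sb + dS + dT ≤ 2 * max dR dP))) := by
  have key : ∀ Tb Sb dR dS dT dP : ℝ, Tb > Sb →
        dR > 0 → dP < 0 → Sb - Tb + dS + dT < 2 * dP → Tb - Sb + dS + dT < 2 * dR →
      (¬ (dR > 0 ∧ dP > 0 ∧ dS + dT < Sb - Tb) ∧
       ¬ (dR < 0 ∧ dP < 0 ∧ dS + dT > Tb - Sb)) ∧
      (¬ (Sb - Tb + dS + dT ≤ 2 * min dR dP ∧ Tb - Sb + dS + dT ≥ 2 * max dR dP) ∧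
       ¬ (Sb - Tb + dS + dT ≥ 2 * min dR dP ∧ Tb - Sb + dS + dT ≤ 2 * max dR dP)) := by
    intro Tb Sb dR dS dT dP h hR hP h1 h2
    have hmin : min dR dP = dP := min_eq_right (le_of_lt (hP.trans hR))
    have hmax : max dR dP = dR := max_eq_left (le_of_lt (hP.trans hR))
    refine ⟨⟨?_, ?_⟩, ?_, ?_⟩
    · rintro ⟨-, h', -⟩; linarith
    · rintro ⟨h', -, -⟩; linarith
    · rw [hmax]; rintro ⟨-, h'⟩; linarith
    · rw [hmin]; rintro ⟨h', -⟩; linarith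
  exact ⟨⟨1, 0, 1, -2, 0, -1, by norm_num,
    key 1 0 1 (-2) 0 (-1) (by norm_num) (by norm_num) (by norm_num) (by norm_num) (by norm_num)⟩, key⟩
end

section
/- Let v₁ = (-1,-1,0,0,1,0,1,0), v₂ = (0,0,-1,-1,0,1,0,1), v₃ = (1,0,1,0,-1,-1,0,0), v₄ = (0,1,0,1,0,0,-1,-1) in ℝ⁸, and let B = (2δR, S̄-T̄+δS+δT, T̄-S̄+δS+δT, 2δP, -2δR, S̄-T̄-δS-δT, T̄-S̄-δS-δT, -2δP) for real numbers T̄ > S̄, δR, δS, δT, δP. If there exist real coefficients c₁, c₂, c₃, c₄ with c₁v₁ + c₂v₂ + c₃v₃ + c₄v₄ = B, then δR + δP = δS + δT. -/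
/-- Necessity direction of Theorem 3: if B lies in the span of the TFT Press-Dyson
vectors, then δR + δP = δS + δT. -/
theorem stmt_5 (Tb Sb dR dS dT dP : ℝ) (hTS : Tb > Sb)
    (h : ∃ c₁ c₂ c₃ c₄ : ℝ,
      c₁ • (![-1,-1,0,0,1,0,1,0] : Fin 8 → ℝ)
        + c₂ • (![0,0,-1,-1,0,1,0,1] : Fin 8 → ℝ)
        + c₃ • (![1,0,1,0,-1,-1,0,0] : Fin 8 → ℝ)
        + c₄ • (![0,1,0,1,0,0,-1,-1] : Fin 8 → ℝ)
      = (![2*dR, Sb - Tb + dS + dT, Tb - Sb + dS + dT, 2*dP,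
           -(2*dR), Sb - Tb - dS - dT, Tb - Sb - dS - dT, -(2*dP)] : Fin 8 → ℝ)) :
    dR + dP = dS + dT := by
  obtain ⟨c₁, c₂, c₃, c₄, h⟩ := h
  have h0 := congrFun h 0
  have h1 := congrFun h 1
  have h2 := congrFun h 2
  have h3 := congrFun h 3
  simp [Pi.add_apply, Pi.smul_apply] at h0 h1 h2 h3
  linarith
end

section
/- Let v₁ = (-1,-1,0,0,1,0,1,0), v₂ = (0,0,-1,-1,0,1,0,1), v₃ = (1,0,1,0,-1,-1,0,0), v₄ = (0,1,0,1,0,0,-1,-1) in ℝ⁸, and let B = (2δR, S̄-T̄+δS+δT, T̄-S̄+δS+δT, 2δP, -2δR, S̄-T̄-δS-δT, T̄-S̄-δS-δT, -2δP). Then there exist real c₁, c₂, c₃, c₄ with c₁v₁ + c₂v₂ + c₃v₃ + c₄v₄ = B if and only if δR + δP = δS + δT. -/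
private lemma cv5 {α : Type*} (x : α) (u : Fin 7 → α) :
    Matrix.vecCons x u 5 = u 4 := rfl

private lemma cv6 {α : Type*} (x : α) (u : Fin 7 → α) :
    Matrix.vecCons x u 6 = u 5 := rfl

private lemma cv7 {α : Type*} (x : α) (u : Fin 7 → α) :
    Matrix.vecCons x u 7 = u 6 := rfl

private lemma cw5 {α : Type*} (x : α) (u : Fin 6 → α) :
    Matrix.vecCons x u 5 = u 4 := rfl

private lemma cw6 {α : Type*} (x : α) (u : Fin 6 → α) :
    Matrix.vecCons x u 6 = u 5 := rfl

private lemma cx5 {α : Type*} (x : α) (u : Fin 5 → α) :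
    Matrix.vecCons x u 5 = u 4 := rfl

/-- Theorem 3: TFT is a fair ZD strategy iff δR + δP = δS + δT. -/
theorem stmt_6 (Tb Sb dR dS dT dP : ℝ) (hTS : Tb > Sb) :
    (∃ c₁ c₂ c₃ c₄ : ℝ,
      c₁ • (![-1,-1,0,0,1,0,1,0] : Fin 8 → ℝ)
        + c₂ • (![0,0,-1,-1,0,1,0,1] : Fin 8 → ℝ)
        + c₃ • (![1,0,1,0,-1,-1,0,0] : Fin 8 → ℝ)
        + c₄ • (![0,1,0,1,0,0,-1,-1] : Fin 8 → ℝ)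
      = (![2*dR, Sb - Tb + dS + dT, Tb - Sb + dS + dT, 2*dP,
           -(2*dR), Sb - Tb - dS - dT, Tb - Sb - dS - dT, -(2*dP)] : Fin 8 → ℝ))
    ↔ dR + dP = dS + dT := by
  constructor
  · rintro ⟨c₁, c₂, c₃, c₄, h⟩
    have h0 := congrFun h 0
    have h1 := congrFun h 1
    have h2 := congrFun h 2
    have h3 := congrFun h 3
    simp [Pi.add_apply, Pi.smul_apply] at h0 h1 h2 h3
    linarith
  · intro h
    refine ⟨0, 2*dR - Tb + Sb - dS - dT, 2*dR, Sb - Tb + dS + dT, ?_⟩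
    funext i
    fin_cases i <;>
      simp [cv5, cv6, cv7, cw5, cw6, cx5, Matrix.cons_val_zero, Matrix.cons_val_one, Matrix.head_cons,
        Matrix.cons_val_succ, Fin.isValue] <;> linarith
end

section
/- Let T̄, S̄, δR, δS, δT, δP be real numbers with T̄ > S̄, and set D1 = S̄-T̄+δS+δT, D2 = T̄-S̄+δS+δT. Then the pair of conditions max{min{2δR, D1, -2δR, -D2}, min{D2, 2δP, -D1, -2δP}} ≥ 0 and min{max{2δR, D1, -2δR, -D2}, max{D2, 2δP, -D1, -2δP}} ≤ 0 holds if and only if δR = 0, δP = 0, and |δS + δT| ≤ T̄ - S̄. -/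
/-- Theorem 4 (reduction to reals): existence of fair partial ZD strategies holds
iff δR = 0, δP = 0, and |δS+δT| ≤ T̄-S̄. -/
theorem stmt_7 (Tb Sb dR dS dT dP : ℝ) (hTS : Tb > Sb) :
    (max (min (min (2*dR) (Sb - Tb + dS + dT)) (min (-(2*dR)) (-(Tb - Sb + dS + dT))))
        (min (min (Tb - Sb + dS + dT) (2*dP)) (min (-(Sb - Tb + dS + dT)) (-(2*dP)))) ≥ 0
      ∧ min (max (max (2*dR) (Sb - Tb + dS + dT)) (max (-(2*dR)) (-(Tb - Sb + dS + dT))))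
        (max (max (Tb - Sb + dS + dT) (2*dP)) (max (-(Sb - Tb + dS + dT)) (-(2*dP)))) ≤ 0)
    ↔ (dR = 0 ∧ dP = 0 ∧ |dS + dT| ≤ Tb - Sb) := by
  rw [abs_le]
  constructor
  · rintro ⟨h1, h2⟩
    rw [ge_iff_le, le_max_iff] at h1
    rw [min_le_iff] at h2
    simp only [le_min_iff, max_le_iff] at h1 h2
    rcases h1 with ⟨⟨_, ha⟩, _, hb⟩ | ⟨⟨ha1, ha2⟩, hb1, hb2⟩
    · linarith
    rcases h2 with ⟨⟨hc1, hc2⟩, hc3, hc4⟩ | ⟨⟨hd1, _⟩, hd2, _⟩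
    · refine ⟨by linarith, by linarith, by linarith, by linarith⟩
    · linarith
  · rintro ⟨hR, hP, hl, hu⟩
    subst hR; subst hP
    constructor
    · rw [ge_iff_le, le_max_iff]
      right
      simp only [le_min_iff]
      refine ⟨⟨by linarith, by norm_num⟩, by linarith, by norm_num⟩
    · rw [min_le_iff]
      left
      simp only [max_le_iff]
      refine ⟨⟨by norm_num, by linarith⟩, by norm_num, by linarith⟩
end

section
/- Let T̄ > S̄, δR, δS, δT, δP be reals satisfying S̄−T̄+δS+δT ≤ 2·min(δR,δP) and T̄−S̄+δS+δT ≥ 2·max(δR,δP). Choose c₁ = max{T̄−S̄−δS−δT+2δP, T̄−S̄+δS+δT−2δR} and assume c₁ > 0 and c₂ := c₁+2δR−2δP > 0. Then the eight quantities p₁=1, p₄=0, q₁=1, q₄=0, q₂=(S̄−T̄+δS+δT+c₁−2δP)/c₂, q₃=(T̄−S̄+δS+δT−2δP)/c₂, p₂=(S̄−T̄−δS−δT+c₁+2δR)/c₁, p₃=(T̄−S̄−δS−δT+2δP)/c₁ all lie in [0,1], and c₁·(−1,−1,0,0,p₁,p₂,p₃,p₄) + c₂·(q₁,q₂,q₃,q₄,−1,−1,0,0)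 + (−2δP)·(−1,−1,−1,−1,1,1,1,1) = (2δR, S̄−T̄+δS+δT, T̄−S̄+δS+δT, 2δP, −2δR, S̄−T̄−δS−δT, T̄−S̄−δS−δT, −2δP). -/
/-- Explicit construction of a fair ZD strategy in Case 1 of the proof of Theorem 2. -/
theorem stmt_15 (Tb Sb dR dS dT dP : ℝ) (hTS : Tb > Sb)
    (h16a : Sb - Tb + dS + dT ≤ 2 * min dR dP)
    (h16b : Tb - Sb + dS + dT ≥ 2 * max dR dP)
    (c₁ c₂ : ℝ)
    (hc₁def : c₁ = max (Tb - Sb - dS - dT + 2*dP) (Tb - Sb + dS + dT - 2*dR))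
    (hc₁ : c₁ > 0) (hc₂def : c₂ = c₁ + 2*dR - 2*dP) (hc₂ : c₂ > 0) :
    ((1:ℝ) ∈ Set.Icc (0:ℝ) 1) ∧ ((0:ℝ) ∈ Set.Icc (0:ℝ) 1)
    ∧ ((1:ℝ) ∈ Set.Icc (0:ℝ) 1) ∧ ((0:ℝ) ∈ Set.Icc (0:ℝ) 1)
    ∧ ((Sb - Tb + dS + dT + c₁ - 2*dP) / c₂ ∈ Set.Icc (0:ℝ) 1)
    ∧ ((Tb - Sb + dS + dT - 2*dP) / c₂ ∈ Set.Icc (0:ℝ) 1)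
    ∧ ((Sb - Tb - dS - dT + c₁ + 2*dR) / c₁ ∈ Set.Icc (0:ℝ) 1)
    ∧ ((Tb - Sb - dS - dT + 2*dP) / c₁ ∈ Set.Icc (0:ℝ) 1)
    ∧ (c₁ • (![-1, -1, 0, 0, 1,
               (Sb - Tb - dS - dT + c₁ + 2*dR) / c₁,
               (Tb - Sb - dS - dT + 2*dP) / c₁, 0] : Fin 8 → ℝ)
        + c₂ • (![1, (Sb - Tb + dS + dT + c₁ - 2*dP) / c₂,
                 (Tb - Sb + dS + dT - 2*dP) / c₂, 0, -1, -1, 0, 0] : Fin 8 → ℝ)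
        + (-(2*dP)) • (![-1,-1,-1,-1,1,1,1,1] : Fin 8 → ℝ)
      = (![2*dR, Sb - Tb + dS + dT, Tb - Sb + dS + dT, 2*dP,
           -(2*dR), Sb - Tb - dS - dT, Tb - Sb - dS - dT, -(2*dP)] : Fin 8 → ℝ)) := by
  have hmin1 : 2 * min dR dP ≤ 2 * dR := by
    have := min_le_left dR dP; linarith
  have hmin2 : 2 * min dR dP ≤ 2 * dP := by
    have := min_le_right dR dP; linarith
  have hmax1 : 2 * dR ≤ 2 * max dR dP := by
    have := le_max_left dR dP; linarith
  have hmax2 : 2 * dP ≤ 2 * max dR dP := by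
    have := le_max_right dR dP; linarith
  have hcl : Tb - Sb - dS - dT + 2*dP ≤ c₁ := hc₁def ▸ le_max_left _ _
  have hcr : Tb - Sb + dS + dT - 2*dR ≤ c₁ := hc₁def ▸ le_max_right _ _
  refine ⟨⟨zero_le_one, le_refl 1⟩, ⟨le_refl 0, zero_le_one⟩,
    ⟨zero_le_one, le_refl 1⟩, ⟨le_refl 0, zero_le_one⟩, ?_, ?_, ?_, ?_, ?_⟩
  · constructor
    · apply div_nonneg _ hc₂.le; linarith
    · rw [div_le_one hc₂]; linarith
  · constructor
    · apply div_nonneg _ hc₂.le; linarith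
    · rw [div_le_one hc₂]; linarith
  · constructor
    · apply div_nonneg _ hc₁.le; linarith
    · rw [div_le_one hc₁]; linarith
  · constructor
    · apply div_nonneg _ hc₁.le; linarith
    · rw [div_le_one hc₁]; linarith
  · subst hc₂def
    funext i
    fin_cases i <;>
      (try simp [show (5:Fin 8) = Fin.succ 4 from rfl, show (6:Fin 8) = Fin.succ 5 from rfl,
        show (7:Fin 8) = Fin.succ 6 from rfl, show (5:Fin 7) = Fin.succ 4 from rfl,
        show (6:Fin 7) = Fin.succ 5 from rfl, show (5:Fin 6) = Fin.succ 4 from rfl,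
        Matrix.cons_val_succ]) <;>
      (try field_simp) <;> (try ring_nf) <;> (try linarith)
end

section
/- Suppose in the periodic prisoner's dilemma the payoff-difference vector B = c₁·v(C,σ₁) + c₂·v(C,σ₂) + c_E·e with c₁ < 0 and c₂ < 0, where v(C,σ₁) = (−1,−1,0,0,p₁,p₂,p₃,p₄), v(C,σ₂) = (q₁,q₂,q₃,q₄,−1,−1,0,0) with pᵢ, qᵢ ∈ [0,1], e = (−1,−1,−1,−1,1,1,1,1), and B = (2δR, S̄−T̄+δS+δT, T̄−S̄+δS+δT, 2δP, −2δR, S̄−T̄−δS−δT, T̄−S̄−δS−δT, −2δP) with T̄ > S̄. Then a contradiction follows; i.e., no such decomposition exists. -/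
/-- Case 4 of the proof of Theorem 2: no decomposition of B with c₁ < 0 and c₂ < 0
exists. -/
theorem stmt_16 (Tb Sb dR dS dT dP : ℝ) (hTS : Tb > Sb)
    (c₁ c₂ cE : ℝ) (hc₁ : c₁ < 0) (hc₂ : c₂ < 0)
    (p₁ p₂ p₃ p₄ q₁ q₂ q₃ q₄ : ℝ)
    (hp₁ : p₁ ∈ Set.Icc (0:ℝ) 1) (hp₂ : p₂ ∈ Set.Icc (0:ℝ) 1)
    (hp₃ : p₃ ∈ Set.Icc (0:ℝ) 1) (hp₄ : p₄ ∈ Set.Icc (0:ℝ) 1)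
    (hq₁ : q₁ ∈ Set.Icc (0:ℝ) 1) (hq₂ : q₂ ∈ Set.Icc (0:ℝ) 1)
    (hq₃ : q₃ ∈ Set.Icc (0:ℝ) 1) (hq₄ : q₄ ∈ Set.Icc (0:ℝ) 1)
    (heq : (![2*dR, Sb - Tb + dS + dT, Tb - Sb + dS + dT, 2*dP,
              -(2*dR), Sb - Tb - dS - dT, Tb - Sb - dS - dT, -(2*dP)] : Fin 8 → ℝ)
      = c₁ • (![-1,-1,0,0,p₁,p₂,p₃,p₄] : Fin 8 → ℝ)
        + c₂ • (![q₁,q₂,q₃,q₄,-1,-1,0,0] : Fin 8 → ℝ)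
        + cE • (![-1,-1,-1,-1,1,1,1,1] : Fin 8 → ℝ)) :
    False := by
  have h1 := congrFun heq 1
  have h5 := congrFun heq ((0:Fin 3).succ.succ.succ.succ.succ)
  simp only [Pi.add_apply, Pi.smul_apply, smul_eq_mul,
    Matrix.cons_val_one, Matrix.head_cons,
    Matrix.cons_val_succ, Matrix.cons_val_zero] at h1 h5
  nlinarith [mul_nonneg (neg_nonneg.mpr hc₁.le) (sub_nonneg.mpr hp₂.2),
    mul_nonneg (neg_nonneg.mpr hc₂.le) (sub_nonneg.mpr hq₂.2)]
end

section
/- Let T̄, S̄, δS, δT be real numbers with T̄ > S̄, and set D1 = S̄−T̄+δS+δT, D2 = T̄−S̄+δS+δT. Suppose δR = 0. If max{min{0, D1, −D2}, min{D2, 2δP, −D1, −2δP}} ≥ 0 with δP ≠ 0, then D1 ≥ 0 and −D2 ≥ 0, which yields the contradiction S̄ − T̄ ≥ 0. Hence δP ≠ 0 and δR = 0 is impossible for a fair partial ZD strategy. -/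
/-- Case δR = 0, δP ≠ 0 in the proof of Theorem 4: the first max-min inequality
cannot hold. -/
theorem stmt_17 (Tb Sb dS dT dP : ℝ) (hTS : Tb > Sb) (hP : dP ≠ 0) :
    ¬ (max (min (min 0 (Sb - Tb + dS + dT)) (-(Tb - Sb + dS + dT)))
          (min (min (min (Tb - Sb + dS + dT) (2*dP)) (-(Sb - Tb + dS + dT))) (-(2*dP)))
        ≥ 0) := by
  intro h
  rw [ge_iff_le, le_max_iff] at h
  rcases h with h | h <;> simp only [le_min_iff] at h
  · linarith [h.1.2, h.2]
  · have : dP = 0 := by linarith [h.1.1.2, h.2]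
    exact hP this
end
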